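/- Let A ∈ ℝ^{m×n}, b ∈ ℝ^m, and let 𝒢 ⊆ ℝ^n be a nonempty convex set. Let 0 < λ₁ < λ₂, let g₁ ∈ 𝒢 be a minimizer of ‖Ag − b‖² + λ₁‖g‖² over 𝒢, and let g₂ ∈ 𝒢 be a minimizer of ‖Ag − b‖² + λ₂‖g‖² over 𝒢. If g₁ ≠ g₂, then ‖g₁‖ > ‖g₂‖. -/

import Mathlib

open Matrix

/-- Euclidean norm of a vector in `ℝ^n`. -/
noncomputable def vecEnorm {n : ℕ} (x : Fin n → ℝ) : ℝ := Real.sqrt (∑ i, x i ^ 2)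

lemma enorm_sq {k : ℕ} (x : Fin k → ℝ) : vecEnorm x ^ 2 = ∑ i, x i ^ 2 :=
  Real.sq_sqrt (Finset.sum_nonneg fun i _ => sq_nonneg _)

/-- Intermediate claim in the proof of Theorem 2 of the paper: increasing the quadratic
regularization weight strictly decreases the norm of a (distinct) minimizer. -/
theorem quadratic_regularization_norm_decreases
    (m n : ℕ) (A : Matrix (Fin m) (Fin n) ℝ) (b : Fin m → ℝ)
    (𝒢 : Set (Fin n → ℝ)) (h𝒢ne : 𝒢.Nonempty) (h𝒢cv : Convex ℝ 𝒢)
    (lam1 lam2 : ℝ) (hlam1 : 0 < lam1) (hlam12 : lam1 < lam2)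
    (g1 g2 : Fin n → ℝ) (hg1 : g1 ∈ 𝒢) (hg2 : g2 ∈ 𝒢)
    (hmin1 : ∀ g ∈ 𝒢,
      (vecEnorm (A.mulVec g1 - b)) ^ 2 + lam1 * (vecEnorm g1) ^ 2
        ≤ (vecEnorm (A.mulVec g - b)) ^ 2 + lam1 * (vecEnorm g) ^ 2)
    (hmin2 : ∀ g ∈ 𝒢,
      (vecEnorm (A.mulVec g2 - b)) ^ 2 + lam2 * (vecEnorm g2) ^ 2
        ≤ (vecEnorm (A.mulVec g - b)) ^ 2 + lam2 * (vecEnorm g) ^ 2)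
    (hne : g1 ≠ g2) :
    vecEnorm g2 < vecEnorm g1 := by
  classical
  set N : (Fin n → ℝ) → ℝ := fun x => ∑ i, x i ^ 2 with hN
  set F : (Fin n → ℝ) → ℝ := fun x => ∑ i, (A.mulVec x - b) i ^ 2 with hF
  have hen : ∀ x : Fin n → ℝ, vecEnorm x ^ 2 = N x := fun x => enorm_sq x
  have hef : ∀ x : Fin n → ℝ, vecEnorm (A.mulVec x - b) ^ 2 = F x := fun x =>
    enorm_sq _
  have h21 := hmin1 g2 hg2
  have h12 := hmin2 g1 hg1
  rw [hen, hen, hef, hef] at h21 h12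
  have hNle : N g2 ≤ N g1 := by nlinarith
  have hNnn : ∀ x : Fin n → ℝ, 0 ≤ N x := fun x =>
    Finset.sum_nonneg fun i _ => sq_nonneg _
  rcases lt_or_eq_of_le hNle with hlt | heq
  · exact Real.sqrt_lt_sqrt (hNnn g2) hlt
  · exfalso
    have hFeq : F g1 = F g2 := by nlinarith
    -- midpoint
    set g : Fin n → ℝ := (1/2 : ℝ) • g1 + (1/2 : ℝ) • g2 with hg
    have hgmem : g ∈ 𝒢 := h𝒢cv hg1 hg2 (by norm_num) (by norm_num) (by norm_num)
    -- strict convexity of N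
    have hNg : N g = (N g1 + N g2) / 2 - ∑ i, ((g1 i - g2 i) / 2) ^ 2 := by
      simp only [hN, hg, Pi.add_apply, Pi.smul_apply, smul_eq_mul]
      rw [eq_sub_iff_add_eq, ← Finset.sum_add_distrib, ← Finset.sum_add_distrib,
        eq_div_iff (by norm_num : (2:ℝ) ≠ 0), Finset.sum_mul]
      apply Finset.sum_congr rfl
      intro i _
      ring
    have hpos : 0 < ∑ i, ((g1 i - g2 i) / 2) ^ 2 := by
      have : ∃ i, g1 i ≠ g2 i := by
        by_contra h
        push_neg at h
        exact hne (funext h)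
      obtain ⟨i, hi⟩ := this
      apply Finset.sum_pos' (fun j _ => sq_nonneg _)
      refine ⟨i, Finset.mem_univ i, ?_⟩
      have hd : g1 i - g2 i ≠ 0 := sub_ne_zero.mpr hi
      positivity
    have hNg' : N g < (N g1 + N g2) / 2 := by linarith
    -- convexity of F
    have hmv : A.mulVec g - b =
        (1/2 : ℝ) • (A.mulVec g1 - b) + (1/2 : ℝ) • (A.mulVec g2 - b) := by
      rw [hg, mulVec_add, mulVec_smul, mulVec_smul]
      funext i
      simp [Pi.add_apply, Pi.smul_apply, Pi.sub_apply, smul_eq_mul]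
      ring
    have hFg : F g ≤ (F g1 + F g2) / 2 := by
      have : F g = ∑ i, ((1/2 : ℝ) * (A.mulVec g1 - b) i
          + (1/2 : ℝ) * (A.mulVec g2 - b) i) ^ 2 := by
        simp only [hF]
        apply Finset.sum_congr rfl
        intro i _
        rw [hmv]
        simp [Pi.add_apply, Pi.smul_apply, smul_eq_mul]
      calc F g ≤ ∑ i, ((A.mulVec g1 - b) i ^ 2 + (A.mulVec g2 - b) i ^ 2) / 2 := by
            rw [this]
            apply Finset.sum_le_sum
            intro i _
            nlinarith [sq_nonneg ((A.mulVec g1 - b) i - (A.mulVec g2 - b) i)]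
        _ = (F g1 + F g2) / 2 := by
            simp only [hF]
            rw [← Finset.sum_add_distrib, ← Finset.sum_div]
    have hobj := hmin1 g hgmem
    rw [hen, hen, hef, hef] at hobj
    nlinarith
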